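/- Let P and Q be probability measures on a filtered space with filtration (F_s)_{s=0}^t, and suppose there is a stopping time τ ≤ t+1 such that KL(P|F_τ, Q|F_τ) ≤ ε. Then for any event A ∈ F_t, Q(A) ≤ P(τ < t) + √(2ε) + P(A), where the middle term comes from Pinsker's inequality applied to the restrictions to F_τ on events {τ < t} and A ∩ {τ ≥ t} which both lie in F_τ. -/

import Mathlib

open MeasureTheory
open scoped ENNReal Classical

noncomputable def klDiv {Ω : Type*} {mΩ : MeasurableSpace Ω} (P Q : Measure Ω) : ℝ≥0∞ :=
  if P ≪ Q ∧ Integrable (fun ω => Real.log (P.rnDeriv Q ω).toReal) P then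
    ENNReal.ofReal (∫ ω, Real.log (P.rnDeriv Q ω).toReal ∂P)
  else ⊤

section Auxiliary

open Real

/-- `log x ≥ 1 - 1/x` for `x > 0`. -/
lemma one_sub_inv_le_log {x : ℝ} (hx : 0 < x) : 1 - x⁻¹ ≤ Real.log x := by
  have h := Real.log_le_sub_one_of_pos (inv_pos.2 hx)
  rw [Real.log_inv] at h
  linarith

private noncomputable def kfun (x : ℝ) : ℝ := (x + 1) * Real.log x - 2 * (x - 1)

private noncomputable def hfun (x : ℝ) : ℝ :=
  (2 * x + 4) * (x * Real.log x - x + 1) - 3 * (x - 1) ^ 2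

lemma hasDerivAt_kfun {x : ℝ} (hx : x ≠ 0) :
    HasDerivAt kfun (Real.log x + (x + 1) * x⁻¹ - 2) x := by
  have h1 : HasDerivAt (fun y : ℝ => y + 1) 1 x := (hasDerivAt_id x).add_const 1
  have h2 : HasDerivAt Real.log x⁻¹ x := Real.hasDerivAt_log hx
  have h3 := h1.mul h2
  have h4 : HasDerivAt (fun y : ℝ => 2 * (y - 1)) 2 x := by
    simpa using ((hasDerivAt_id x).sub_const 1).const_mul 2
  have := h3.sub h4
  refine this.congr_deriv ?_
  ring

lemma hasDerivAt_hfun {x : ℝ} (hx : x ≠ 0) :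
    HasDerivAt hfun (4 * kfun x) x := by
  have h1 : HasDerivAt (fun y : ℝ => 2 * y + 4) 2 x := by
    simpa using ((hasDerivAt_id x).const_mul 2).add_const 4
  have h2 : HasDerivAt (fun y : ℝ => y * Real.log y - y + 1) (Real.log x + 1 - 1) x := by
    exact ((Real.hasDerivAt_mul_log hx).sub (hasDerivAt_id x)).add_const 1
  have h3 := h1.mul h2
  have h4 : HasDerivAt (fun y : ℝ => 3 * (y - 1) ^ 2) (3 * (2 * (x - 1))) x := by
    simpa using (((hasDerivAt_id x).sub_const 1).pow 2).const_mul 3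
  have := h3.sub h4
  refine this.congr_deriv ?_
  unfold kfun
  ring

lemma kfun_deriv_nonneg {x : ℝ} (hx : 0 < x) :
    0 ≤ Real.log x + (x + 1) * x⁻¹ - 2 := by
  have h := one_sub_inv_le_log hx
  have : (x + 1) * x⁻¹ = 1 + x⁻¹ := by field_simp
  rw [this]
  linarith

lemma kfun_nonneg {x : ℝ} (hx : 1 ≤ x) : 0 ≤ kfun x := by
  have hmono : MonotoneOn kfun (Set.Ici 1) := by
    apply monotoneOn_of_deriv_nonneg (convex_Ici 1)
    · intro y hy
      exact (hasDerivAt_kfun (by simp at hy; linarith)).continuousAt.continuousWithinAt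
    · intro y hy
      rw [interior_Ici] at hy
      exact (hasDerivAt_kfun (by simp at hy; linarith)).differentiableAt.differentiableWithinAt
    · intro y hy
      rw [interior_Ici] at hy
      rw [(hasDerivAt_kfun (by simp at hy; linarith : (y:ℝ) ≠ 0)).deriv]
      exact kfun_deriv_nonneg (by simp at hy; linarith)
  have h1 : kfun 1 = 0 := by simp [kfun]
  have := hmono (Set.mem_Ici.2 le_rfl) (Set.mem_Ici.2 hx) hx
  linarith

lemma kfun_nonpos {x : ℝ} (hx0 : 0 < x) (hx : x ≤ 1) : kfun x ≤ 0 := by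
  rcases eq_or_lt_of_le hx with rfl | hlt
  · simp [kfun]
  have hmono : MonotoneOn kfun (Set.Icc x 1) := by
    apply monotoneOn_of_deriv_nonneg (convex_Icc x 1)
    · intro y hy
      have : (0:ℝ) < y := lt_of_lt_of_le hx0 hy.1
      exact (hasDerivAt_kfun this.ne').continuousAt.continuousWithinAt
    · intro y hy
      rw [interior_Icc] at hy
      have : (0:ℝ) < y := lt_trans hx0 hy.1
      exact (hasDerivAt_kfun this.ne').differentiableAt.differentiableWithinAt
    · intro y hy
      rw [interior_Icc] at hy
      have hy0 : (0:ℝ) < y := lt_trans hx0 hy.1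
      rw [(hasDerivAt_kfun hy0.ne').deriv]
      exact kfun_deriv_nonneg hy0
  have h1 : kfun 1 = 0 := by simp [kfun]
  have := hmono (Set.mem_Icc.2 ⟨le_rfl, hx⟩) (Set.mem_Icc.2 ⟨hx, le_rfl⟩) hx
  linarith

lemma hfun_nonneg {x : ℝ} (hx : 0 < x) : 0 ≤ hfun x := by
  have h1 : hfun 1 = 0 := by simp [hfun]
  rcases le_or_gt 1 x with hge | hlt
  · have hmono : MonotoneOn hfun (Set.Ici 1) := by
      apply monotoneOn_of_deriv_nonneg (convex_Ici 1)
      · intro y hy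
        exact (hasDerivAt_hfun (by simp at hy; linarith)).continuousAt.continuousWithinAt
      · intro y hy
        rw [interior_Ici] at hy
        exact (hasDerivAt_hfun (by simp at hy; linarith)).differentiableAt.differentiableWithinAt
      · intro y hy
        rw [interior_Ici] at hy
        rw [(hasDerivAt_hfun (by simp at hy; linarith : (y:ℝ) ≠ 0)).deriv]
        have : 0 ≤ kfun y := kfun_nonneg (le_of_lt hy)
        linarith
    have := hmono (Set.mem_Ici.2 le_rfl) (Set.mem_Ici.2 hge) hge
    linarith
  · have hmono : AntitoneOn hfun (Set.Icc x 1) := by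
      apply antitoneOn_of_deriv_nonpos (convex_Icc x 1)
      · intro y hy
        have : (0:ℝ) < y := lt_of_lt_of_le hx hy.1
        exact (hasDerivAt_hfun this.ne').continuousAt.continuousWithinAt
      · intro y hy
        rw [interior_Icc] at hy
        have : (0:ℝ) < y := lt_trans hx hy.1
        exact (hasDerivAt_hfun this.ne').differentiableAt.differentiableWithinAt
      · intro y hy
        rw [interior_Icc] at hy
        have hy0 : (0:ℝ) < y := lt_trans hx hy.1
        rw [(hasDerivAt_hfun hy0.ne').deriv]
        have : kfun y ≤ 0 := kfun_nonpos hy0 (le_of_lt hy.2)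
        linarith
    have := hmono (Set.mem_Icc.2 ⟨le_rfl, hlt.le⟩) (Set.mem_Icc.2 ⟨hlt.le, le_rfl⟩) hlt.le
    linarith

/-- The key pointwise inequality behind Pinsker's inequality. -/
lemma key_ineq {x : ℝ} (hx : 0 ≤ x) :
    3 * (x - 1) ^ 2 ≤ (2 * x + 4) * (x * Real.log x - x + 1) := by
  rcases eq_or_lt_of_le hx with rfl | hpos
  · simp [Real.log_zero]; norm_num
  · have := hfun_nonneg hpos
    unfold hfun at this
    linarith

lemma pinsker_aux {Ω : Type*} {m : MeasurableSpace Ω} (μ ν : Measure Ω)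
    [IsProbabilityMeasure μ] [IsProbabilityMeasure ν] (hac : μ ≪ ν)
    (hint : Integrable (fun ω => Real.log (μ.rnDeriv ν ω).toReal) μ)
    {ε : ℝ} (hε : 0 ≤ ε)
    (hKL : ∫ ω, Real.log (μ.rnDeriv ν ω).toReal ∂μ ≤ ε)
    (B : Set Ω) : ν B ≤ μ B + ENNReal.ofReal (Real.sqrt (2 * ε)) := by
  set f : Ω → ℝ := fun ω => (μ.rnDeriv ν ω).toReal with hf_def
  have hf_meas : Measurable f := (Measure.measurable_rnDeriv μ ν).ennreal_toReal
  have hf_nonneg : ∀ ω, 0 ≤ f ω := fun ω => ENNReal.toReal_nonneg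
  -- integrability of f log f w.r.t. ν
  have hflf : Integrable (fun ω => f ω * Real.log (f ω)) ν := by
    have := (MeasureTheory.integrable_rnDeriv_smul_iff (f := fun ω => Real.log (f ω)) hac).2 hint
    simpa [smul_eq_mul] using this
  have hf_int : Integrable f ν := Measure.integrable_toReal_rnDeriv
  -- value of the KL integral over ν
  have hKLν : ∫ ω, f ω * Real.log (f ω) ∂ν ≤ ε := by
    have h := MeasureTheory.integral_rnDeriv_smul (f := fun ω => Real.log (f ω)) hac
    simp only [smul_eq_mul] at h
    rw [h]; exact hKL
  have hfint1 : ∫ ω, f ω ∂ν = 1 := by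
    rw [Measure.integral_toReal_rnDeriv hac]
    simp
  -- φ := f log f - f + 1, nonnegative with ∫ φ dν ≤ ε
  set φ : Ω → ℝ := fun ω => f ω * Real.log (f ω) - f ω + 1 with hφ_def
  have hφ_int : Integrable φ ν := (hflf.sub hf_int).add (integrable_const 1)
  have hφ_nonneg : ∀ ω, 0 ≤ φ ω := by
    intro ω
    have h1 := key_ineq (hf_nonneg ω)
    have h2 : (0:ℝ) < 2 * f ω + 4 := by linarith [hf_nonneg ω]
    show (0:ℝ) ≤ f ω * Real.log (f ω) - f ω + 1
    nlinarith [sq_nonneg (f ω - 1)]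
  have hφ_integral : ∫ ω, φ ω ∂ν ≤ ε := by
    have h1 : Integrable (fun ω => f ω * Real.log (f ω) - f ω) ν := hflf.sub hf_int
    have : ∫ ω, φ ω ∂ν = (∫ ω, (f ω * Real.log (f ω) - f ω) ∂ν) + ∫ _ω, (1:ℝ) ∂ν :=
      integral_add h1 (integrable_const 1)
    rw [this, integral_sub hflf hf_int, hfint1]
    simp only [integral_const, measure_univ, probReal_univ, smul_eq_mul, one_mul]
    linarith
  -- lintegral of |f - 1| via Cauchy-Schwarz
  set U : Ω → ℝ≥0∞ := fun ω => ENNReal.ofReal ((2 * f ω + 4) / 3) with hU_def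
  set V : Ω → ℝ≥0∞ := fun ω => ENNReal.ofReal (3 * (f ω - 1) ^ 2 / (2 * f ω + 4)) with hV_def
  have hden_pos : ∀ ω, (0:ℝ) < 2 * f ω + 4 := fun ω => by have := hf_nonneg ω; linarith
  have hUV : ∀ ω, U ω * V ω = ENNReal.ofReal ((f ω - 1) ^ 2) := by
    intro ω
    rw [hU_def, hV_def, ← ENNReal.ofReal_mul (by positivity)]
    congr 1
    have hne := (hden_pos ω).ne'
    field_simp
  have hCS : (∫⁻ ω, ENNReal.ofReal |f ω - 1| ∂ν)
      ≤ (∫⁻ ω, U ω ∂ν) ^ ((1:ℝ)/2) * (∫⁻ ω, V ω ∂ν) ^ ((1:ℝ)/2) := by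
    have hconj : Real.HolderConjugate 2 2 := Real.HolderConjugate.two_two
    have hUm : AEMeasurable (fun ω => U ω ^ ((1:ℝ)/2)) ν := by
      exact ((ENNReal.measurable_ofReal.comp ((hf_meas.const_mul 2).add_const 4 |>.div_const 3)).pow_const _).aemeasurable
    have hVm : AEMeasurable (fun ω => V ω ^ ((1:ℝ)/2)) ν := by
      have : Measurable fun ω => 3 * (f ω - 1) ^ 2 / (2 * f ω + 4) := by
        exact (((hf_meas.sub_const 1).pow_const 2).const_mul 3).div ((hf_meas.const_mul 2).add_const 4)
      exact ((ENNReal.measurable_ofReal.comp this).pow_const _).aemeasurable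
    have h := ENNReal.lintegral_mul_le_Lp_mul_Lq ν hconj hUm hVm
    have heq1 : ∀ ω, (U ω ^ ((1:ℝ)/2)) ^ (2:ℝ) = U ω := by
      intro ω
      rw [← ENNReal.rpow_mul]
      norm_num
    have heq2 : ∀ ω, (V ω ^ ((1:ℝ)/2)) ^ (2:ℝ) = V ω := by
      intro ω
      rw [← ENNReal.rpow_mul]
      norm_num
    have heq3 : ∀ ω, U ω ^ ((1:ℝ)/2) * V ω ^ ((1:ℝ)/2) = ENNReal.ofReal |f ω - 1| := by
      intro ω
      rw [← ENNReal.mul_rpow_of_nonneg _ _ (by norm_num : (0:ℝ) ≤ 1/2), hUV ω,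
        ENNReal.ofReal_rpow_of_nonneg (by positivity) (by norm_num : (0:ℝ) ≤ 1/2)]
      congr 1
      rw [← Real.sqrt_eq_rpow, Real.sqrt_sq_eq_abs]
    calc ∫⁻ ω, ENNReal.ofReal |f ω - 1| ∂ν
        = ∫⁻ ω, (fun ω => U ω ^ ((1:ℝ)/2)) ω * (fun ω => V ω ^ ((1:ℝ)/2)) ω ∂ν := by
          simp_rw [heq3]
      _ ≤ (∫⁻ ω, (U ω ^ ((1:ℝ)/2)) ^ (2:ℝ) ∂ν) ^ ((1:ℝ)/2)
            * (∫⁻ ω, (V ω ^ ((1:ℝ)/2)) ^ (2:ℝ) ∂ν) ^ ((1:ℝ)/2) := h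
      _ = (∫⁻ ω, U ω ∂ν) ^ ((1:ℝ)/2) * (∫⁻ ω, V ω ∂ν) ^ ((1:ℝ)/2) := by
          simp_rw [heq1, heq2]
  -- ∫⁻ U = 2
  have hU_val : ∫⁻ ω, U ω ∂ν = ENNReal.ofReal 2 := by
    have hint2 : Integrable (fun ω => (2 * f ω + 4) / 3) ν :=
      ((hf_int.const_mul 2).add (integrable_const 4)).div_const 3
    rw [hU_def, ← ofReal_integral_eq_lintegral_ofReal hint2
      (Filter.Eventually.of_forall fun ω => by have := hf_nonneg ω; positivity)]
    congr 1
    rw [integral_div, integral_add (hf_int.const_mul 2) (integrable_const 4),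
      integral_const_mul, hfint1]
    simp only [integral_const, measure_univ, probReal_univ, smul_eq_mul, one_mul]
    norm_num
  -- ∫⁻ V ≤ ε
  have hV_val : ∫⁻ ω, V ω ∂ν ≤ ENNReal.ofReal ε := by
    have hle : ∀ ω, V ω ≤ ENNReal.ofReal (φ ω) := by
      intro ω
      rw [hV_def]
      apply ENNReal.ofReal_le_ofReal
      rw [div_le_iff₀ (hden_pos ω)]
      have := key_ineq (hf_nonneg ω)
      calc 3 * (f ω - 1) ^ 2 ≤ (2 * f ω + 4) * (f ω * Real.log (f ω) - f ω + 1) := this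
        _ = φ ω * (2 * f ω + 4) := by rw [hφ_def]; ring
    calc ∫⁻ ω, V ω ∂ν ≤ ∫⁻ ω, ENNReal.ofReal (φ ω) ∂ν := lintegral_mono hle
      _ = ENNReal.ofReal (∫ ω, φ ω ∂ν) := (ofReal_integral_eq_lintegral_ofReal hφ_int
          (Filter.Eventually.of_forall hφ_nonneg)).symm
      _ ≤ ENNReal.ofReal ε := ENNReal.ofReal_le_ofReal hφ_integral
  -- combine: ∫⁻ |f-1| ≤ ofReal √(2ε)
  have habs : (∫⁻ ω, ENNReal.ofReal |f ω - 1| ∂ν) ≤ ENNReal.ofReal (Real.sqrt (2 * ε)) := by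
    calc (∫⁻ ω, ENNReal.ofReal |f ω - 1| ∂ν)
        ≤ (∫⁻ ω, U ω ∂ν) ^ ((1:ℝ)/2) * (∫⁻ ω, V ω ∂ν) ^ ((1:ℝ)/2) := hCS
      _ ≤ (ENNReal.ofReal 2) ^ ((1:ℝ)/2) * (ENNReal.ofReal ε) ^ ((1:ℝ)/2) := by
          rw [hU_val]
          exact mul_le_mul_right (ENNReal.rpow_le_rpow hV_val (by norm_num)) _
      _ = ENNReal.ofReal (Real.sqrt (2 * ε)) := by
          rw [ENNReal.ofReal_rpow_of_nonneg (by norm_num) (by norm_num : (0:ℝ) ≤ 1/2),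
            ENNReal.ofReal_rpow_of_nonneg hε (by norm_num : (0:ℝ) ≤ 1/2),
            ← ENNReal.ofReal_mul (by positivity)]
          congr 1
          rw [← Real.sqrt_eq_rpow, ← Real.sqrt_eq_rpow, ← Real.sqrt_mul (by norm_num)]
  -- final inequality
  have hpt : ∀ᵐ ω ∂ν, (1:ℝ≥0∞) ≤ μ.rnDeriv ν ω + ENNReal.ofReal |f ω - 1| := by
    filter_upwards [Measure.rnDeriv_lt_top μ ν] with ω hω
    have hrn : μ.rnDeriv ν ω = ENNReal.ofReal (f ω) := (ENNReal.ofReal_toReal hω.ne).symm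
    rw [hrn, ← ENNReal.ofReal_add (hf_nonneg ω) (abs_nonneg _), ← ENNReal.ofReal_one]
    apply ENNReal.ofReal_le_ofReal
    rcases le_or_gt (f ω) 1 with h | h
    · rw [abs_of_nonpos (by linarith)]; linarith
    · rw [abs_of_pos (by linarith)]; linarith
  calc ν B = ∫⁻ _ω in B, 1 ∂ν := (setLIntegral_one B).symm
    _ ≤ ∫⁻ ω in B, (μ.rnDeriv ν ω + ENNReal.ofReal |f ω - 1|) ∂ν := by
        apply lintegral_mono_ae
        exact ae_restrict_of_ae hpt
    _ = (∫⁻ ω in B, μ.rnDeriv ν ω ∂ν) + ∫⁻ ω in B, ENNReal.ofReal |f ω - 1| ∂ν := by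
        apply lintegral_add_left
        exact Measure.measurable_rnDeriv μ ν
    _ ≤ μ B + ENNReal.ofReal (Real.sqrt (2 * ε)) := by
        gcongr
        · exact Measure.setLIntegral_rnDeriv_le B
        · exact le_trans (setLIntegral_le_lintegral _ _) habs

end Auxiliary

theorem stmt_13 {Ω : Type*} {m0 : MeasurableSpace Ω}
    (F : MeasureTheory.Filtration ℕ m0)
    (P Q : Measure Ω) [IsProbabilityMeasure P] [IsProbabilityMeasure Q]
    (t : ℕ) (τ : Ω → ℕ) (hτ : MeasureTheory.IsStoppingTime F (fun ω => (τ ω : WithTop ℕ)))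
    (hτle : ∀ ω, τ ω ≤ t + 1)
    (ε : ℝ) (hε : 0 ≤ ε)
    (hKL : @klDiv Ω hτ.measurableSpace (P.trim hτ.measurableSpace_le)
        (Q.trim hτ.measurableSpace_le) ≤ ENNReal.ofReal ε) :
    ∀ A : Set Ω, MeasurableSet[F t] A →
      Q A ≤ P {ω | τ ω < t} + ENNReal.ofReal (Real.sqrt (2 * ε)) + P A := by
  intro A hA
  have hm' : hτ.measurableSpace ≤ m0 := hτ.measurableSpace_le
  haveI hPtrim : IsProbabilityMeasure (P.trim hm') :=
    ⟨by rw [trim_measurableSet_eq hm' MeasurableSet.univ]; exact measure_univ⟩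
  haveI hQtrim : IsProbabilityMeasure (Q.trim hm') :=
    ⟨by rw [trim_measurableSet_eq hm' MeasurableSet.univ]; exact measure_univ⟩
  rw [klDiv] at hKL
  split_ifs at hKL with hcond
  swap
  · exact absurd (top_le_iff.1 hKL) ENNReal.ofReal_ne_top
  obtain ⟨hac, hint⟩ := hcond
  have hKLr : ∫ ω, Real.log (((P.trim hm').rnDeriv (Q.trim hm')) ω).toReal ∂(P.trim hm') ≤ ε := by
    rcases le_total (∫ ω, Real.log (((P.trim hm').rnDeriv (Q.trim hm')) ω).toReal ∂(P.trim hm')) 0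
      with h | h
    · linarith
    · exact (ENNReal.ofReal_le_ofReal_iff hε).1 hKL
  set B : Set Ω := {ω | τ ω < t} ∪ (A ∩ {ω | t ≤ τ ω}) with hB_def
  have hlt : MeasurableSet[hτ.measurableSpace] {ω | τ ω < t} := by
    simpa using hτ.measurableSet_lt_of_countable' t
  have hA' : MeasurableSet[hτ.measurableSpace] (A ∩ {ω | t ≤ τ ω}) := by
    rw [hτ.measurableSet]
    refine ⟨?_, ?_⟩
    · have h2 : MeasurableSet[F t] {ω | t ≤ τ ω} := by
        simpa using hτ.measurableSet_ge_of_countable t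
      exact le_iSup (fun i => (F i : MeasurableSpace Ω)) t _ (hA.inter h2)
    intro i
    suffices MeasurableSet[F i] (A ∩ {ω | t ≤ τ ω} ∩ {ω | τ ω ≤ i}) by simpa using this
    by_cases hit : t ≤ i
    · have h1 : MeasurableSet[F i] A := F.mono hit _ hA
      have h2 : MeasurableSet[F i] {ω | t ≤ τ ω} :=
        F.mono hit _ (by simpa using hτ.measurableSet_ge_of_countable t)
      exact (h1.inter h2).inter (by simpa using hτ i)
    · push_neg at hit
      have : A ∩ {ω | t ≤ τ ω} ∩ {ω | τ ω ≤ i} = ∅ := by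
        ext ω
        simp only [Set.mem_inter_iff, Set.mem_setOf_eq, Set.mem_empty_iff_false, iff_false]
        rintro ⟨⟨-, h1⟩, h2⟩
        omega
      rw [this]
      exact @MeasurableSet.empty _ (F i)
  have hB : MeasurableSet[hτ.measurableSpace] B := hlt.union hA'
  have hsub : A ⊆ B := by
    intro ω hω
    by_cases h : τ ω < t
    · exact Or.inl h
    · exact Or.inr ⟨hω, not_lt.1 h⟩
  calc Q A ≤ Q B := measure_mono hsub
    _ = Q.trim hm' B := (trim_measurableSet_eq hm' hB).symm
    _ ≤ P.trim hm' B + ENNReal.ofReal (Real.sqrt (2 * ε)) :=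
        pinsker_aux _ _ hac hint hε hKLr B
    _ = P B + ENNReal.ofReal (Real.sqrt (2 * ε)) := by rw [trim_measurableSet_eq hm' hB]
    _ ≤ (P {ω | τ ω < t} + P (A ∩ {ω | t ≤ τ ω})) + ENNReal.ofReal (Real.sqrt (2 * ε)) := by
        gcongr
        exact measure_union_le _ _
    _ ≤ (P {ω | τ ω < t} + P A) + ENNReal.ofReal (Real.sqrt (2 * ε)) := by
        gcongr
        exact Set.inter_subset_left
    _ = P {ω | τ ω < t} + ENNReal.ofReal (Real.sqrt (2 * ε)) + P A := by ring
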